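/- Let G be a group and H a subgroup of G of finite height such that Z(G) ∩ H is infinite. Then H has finite index in G. -/

import Mathlib

open Pointwise

/-- A subgroup `H` of `G` has height at most `n`: for any `n+1` pairwise distinct left
cosets `g₀H, …, gₙH`, the intersection `g₀Hg₀⁻¹ ∩ … ∩ gₙHgₙ⁻¹` is finite. -/
def HeightLE {G : Type*} [Group G] (H : Subgroup G) (n : ℕ) : Prop :=
  ∀ g : Fin (n + 1) → G,
    (∀ i j, i ≠ j → g i • (H : Set G) ≠ g j • (H : Set G)) →
    (⋂ i, (fun x => g i * x * (g i)⁻¹) '' (H : Set G)).Finite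

/-- `H` has finite height in `G` if it has height at most `n` for some `n`. -/
def HasFiniteHeight {G : Type*} [Group G] (H : Subgroup G) : Prop :=
  ∃ n : ℕ, HeightLE H n

/-- Let `G` be a group and `H` a subgroup of finite height such that `Z(G) ∩ H` is infinite.
Then `H` has finite index in `G`. -/
theorem finiteHeight_infinite_center_inter_implies_finiteIndex
    {G : Type*} [Group G] (H : Subgroup G)
    (hheight : HasFiniteHeight H)
    (hinf : ((Subgroup.center G ⊓ H : Subgroup G) : Set G).Infinite) :
    H.index ≠ 0 := by
  obtain ⟨n, hn⟩ := hheight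
  intro hidx
  -- G ⧸ H is infinite
  have hinfQ : Infinite (G ⧸ H) := by
    rw [Subgroup.index, Nat.card_eq_zero] at hidx
    rcases hidx with h | h
    · exact absurd (Nonempty.intro ((1 : G) : G ⧸ H)) (not_nonempty_iff.mpr h)
    · exact h
  -- pick n+1 distinct cosets
  obtain ⟨f⟩ : Nonempty (Fin (n + 1) ↪ G ⧸ H) :=
    ⟨(Fin.valEmbedding).trans (Infinite.natEmbedding (G ⧸ H))⟩
  set g : Fin (n + 1) → G := fun i => Quotient.out (f i)
  have hmk : ∀ i, (QuotientGroup.mk (g i) : G ⧸ H) = f i := fun i => Quotient.out_eq' _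
  have hdist : ∀ i j, i ≠ j → g i • (H : Set G) ≠ g j • (H : Set G) := by
    intro i j hij hset
    apply hij
    apply f.injective
    rw [← hmk i, ← hmk j]
    rw [QuotientGroup.eq]
    have : g j ∈ g i • (H : Set G) := by
      rw [hset]
      exact ⟨1, H.one_mem, by simp⟩
    obtain ⟨h, hh, hgh⟩ := this
    rw [← hgh]
    simpa using hh
  have hfin := hn g hdist
  refine (hinf.mono ?_) hfin
  intro z hz
  obtain ⟨hzc, hzH⟩ : z ∈ Subgroup.center G ∧ z ∈ H := hz
  refine Set.mem_iInter.2 fun i => ⟨z, hzH, ?_⟩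
  have := (Subgroup.mem_center_iff.mp hzc (g i)).symm
  simp [← this]
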